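/- Let X be a finite set with a weight μ : X → [0,∞), let Y_1, …, Y_d be finite sets with lattice norms N_j on ℝ^{Y_j}, let K : X × Y_1 × ⋯ × Y_d → [0,∞) be a kernel with associated positive multilinear operator T, let 1 ≤ q < ∞ with conjugate exponent q', and let A > 0. Suppose that for every M : X → [0,∞) with ‖M‖_{ℓ^{q'}(μ)} ≤ 1 there exist kernels g_j : X × Y_j → [0,∞) such that M(x)^d K(x,y_1,…,y_d) ≤ g_1(x,y_1)⋯g_d(x,y_d) for all x, y_1, …, y_d, and such that for every j and every nonnegative f ∈ ℝ^{Y_j}, Σ_{x∈X} μ(x) Σ_{y∈Y_j} g_j(x,y) f(y) ≤ A·N_j(f). Then for all nonnegative f_j ∈ ℝ^{Y_j}, ‖T(f_1,…,f_d)^{1/d}‖_{L^q(μ)} ≤ A·(N_1(f_1)⋯N_d(f_d))^{1/d}. -/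

import Mathlib

/- STATEMENT 14: The easy converse direction of multilinear duality: the factorisation
   property implies the norm inequality (via Hölder's inequality), finite discrete
   setting. -/

/-- Generalized Hölder / AM-GM: a weighted sum of geometric means is bounded by the
geometric mean of the weighted sums. -/
lemma weighted_sum_geom_mean_le {d : ℕ} (hd : 1 ≤ d) {X : Type*} [Fintype X]
    (w : X → ℝ) (hw : ∀ x, 0 ≤ w x) (a : Fin d → X → ℝ) (ha : ∀ j x, 0 ≤ a j x) :
    ∑ x, w x * ∏ j, (a j x) ^ ((1 : ℝ) / d) ≤ ∏ j, (∑ x, w x * a j x) ^ ((1 : ℝ) / d) := by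
  have hd0 : (0 : ℝ) < d := by exact_mod_cast hd
  have hdinv : (0 : ℝ) ≤ 1 / d := by positivity
  set B : Fin d → ℝ := fun j => ∑ x, w x * a j x with hB
  have hB0 : ∀ j, 0 ≤ B j := fun j =>
    Finset.sum_nonneg fun x _ => mul_nonneg (hw x) (ha j x)
  by_cases hz : ∃ j, B j = 0
  · obtain ⟨j0, hj0⟩ := hz
    have hRHS : ∏ j, (B j) ^ ((1 : ℝ) / d) = 0 := by
      apply Finset.prod_eq_zero (Finset.mem_univ j0)
      rw [hj0, Real.zero_rpow (by positivity)]
    rw [hRHS]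
    have hterm : ∀ x, w x * ∏ j, (a j x) ^ ((1 : ℝ) / d) = 0 := by
      intro x
      have hx : w x * a j0 x = 0 := by
        have := (Finset.sum_eq_zero_iff_of_nonneg
          (fun x _ => mul_nonneg (hw x) (ha j0 x))).mp hj0 x (Finset.mem_univ x)
        exact this
      rcases mul_eq_zero.mp hx with h | h
      · rw [h, zero_mul]
      · have : ∏ j, (a j x) ^ ((1 : ℝ) / d) = 0 := by
          apply Finset.prod_eq_zero (Finset.mem_univ j0)
          rw [h, Real.zero_rpow (by positivity)]
        rw [this, mul_zero]
    rw [Finset.sum_congr rfl fun x _ => hterm x, Finset.sum_const, smul_zero]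
  · push_neg at hz
    have hBpos : ∀ j, 0 < B j := fun j => lt_of_le_of_ne (hB0 j) (Ne.symm (hz j))
    -- pointwise AM-GM
    have key : ∀ x, ∏ j, (a j x) ^ ((1 : ℝ) / d) ≤
        (∏ j, (B j) ^ ((1 : ℝ) / d)) * ∑ j, (1 / d) * (a j x / B j) := by
      intro x
      have amgm : ∏ j, (a j x / B j) ^ ((1 : ℝ) / d) ≤ ∑ j, (1 / d) * (a j x / B j) := by
        have := Real.geom_mean_le_arith_mean_weighted Finset.univ
          (fun _ : Fin d => (1 : ℝ) / d) (fun j => a j x / B j)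
          (fun _ _ => hdinv)
          (by simp [Finset.sum_const, Finset.card_univ]
              field_simp)
          (fun j _ => div_nonneg (ha j x) (hB0 j))
        simpa using this
      have split : ∀ j, (a j x) ^ ((1 : ℝ) / d) =
          (B j) ^ ((1 : ℝ) / d) * (a j x / B j) ^ ((1 : ℝ) / d) := by
        intro j
        rw [← Real.mul_rpow (hB0 j) (div_nonneg (ha j x) (hB0 j))]
        rw [mul_div_cancel₀ _ (hz j)]
      calc ∏ j, (a j x) ^ ((1 : ℝ) / d)
          = ∏ j, ((B j) ^ ((1 : ℝ) / d) * (a j x / B j) ^ ((1 : ℝ) / d)) :=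
            Finset.prod_congr rfl fun j _ => split j
        _ = (∏ j, (B j) ^ ((1 : ℝ) / d)) * ∏ j, (a j x / B j) ^ ((1 : ℝ) / d) :=
            Finset.prod_mul_distrib
        _ ≤ (∏ j, (B j) ^ ((1 : ℝ) / d)) * ∑ j, (1 / d) * (a j x / B j) := by
            apply mul_le_mul_of_nonneg_left amgm
            exact Finset.prod_nonneg fun j _ => Real.rpow_nonneg (hB0 j) _
    calc ∑ x, w x * ∏ j, (a j x) ^ ((1 : ℝ) / d)
        ≤ ∑ x, w x * ((∏ j, (B j) ^ ((1 : ℝ) / d)) * ∑ j, (1 / d) * (a j x / B j)) := by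
          apply Finset.sum_le_sum
          intro x _
          exact mul_le_mul_of_nonneg_left (key x) (hw x)
      _ = ∑ x, ∑ j, (∏ j, (B j) ^ ((1 : ℝ) / d)) * ((1 / d) * (w x * a j x / B j)) := by
          apply Finset.sum_congr rfl
          intro x _
          rw [Finset.mul_sum, Finset.mul_sum]
          apply Finset.sum_congr rfl
          intro j _
          ring
      _ = ∑ j, ∑ x, (∏ j, (B j) ^ ((1 : ℝ) / d)) * ((1 / d) * (w x * a j x / B j)) :=
          Finset.sum_comm
      _ = (∏ j, (B j) ^ ((1 : ℝ) / d)) * ∑ j, (1 / d) * ((∑ x, w x * a j x) / B j) := by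
          rw [Finset.mul_sum]
          apply Finset.sum_congr rfl
          intro j _
          rw [← Finset.mul_sum, ← Finset.mul_sum, ← Finset.sum_div]
      _ = ∏ j, (B j) ^ ((1 : ℝ) / d) := by
          have : ∑ j : Fin d, (1 / (d : ℝ)) * ((∑ x, w x * a j x) / B j) = 1 := by
            have : ∀ j : Fin d, (1 / (d : ℝ)) * ((∑ x, w x * a j x) / B j)
                = 1 / d := by
              intro j
              rw [show (∑ x, w x * a j x) = B j from rfl, div_self (hz j), mul_one]
            rw [Finset.sum_congr rfl fun j _ => this j, Finset.sum_const,
              Finset.card_univ, Fintype.card_fin, nsmul_eq_mul]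
            field_simp
          rw [this, mul_one]

theorem factorisation_implies_norm_bound
    (d : ℕ) (hd : 1 ≤ d)
    (X : Type*) [Fintype X] (μ : X → ℝ) (hμ : ∀ x, 0 ≤ μ x)
    (Y : Fin d → Type*) [∀ j, Fintype (Y j)]
    -- lattice norms on ℝ^{Y_j}
    (N : ∀ j, (Y j → ℝ) → ℝ)
    (hN_nonneg : ∀ j f, 0 ≤ N j f)
    (hN_add : ∀ j f g, N j (f + g) ≤ N j f + N j g)
    (hN_smul : ∀ j (c : ℝ) f, N j (c • f) = |c| * N j f)
    (hN_defin : ∀ j f, N j f = 0 → f = 0)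
    (hN_lattice : ∀ j f g, (∀ y, |f y| ≤ |g y|) → N j f ≤ N j g)
    -- nonnegative kernel
    (K : X → (∀ j, Y j) → ℝ) (hK : ∀ x y, 0 ≤ K x y)
    (q : ℝ) (hq : 1 ≤ q)
    (A : ℝ) (hA : 0 < A)
    -- hypothesis: the duality (factorisation) property holds for every admissible M
    (hdual : ∀ M : X → ℝ, (∀ x, 0 ≤ M x) →
      (q = 1 → ∀ x, M x ≤ 1) →
      (1 < q → (∑ x, μ x * M x ^ (q / (q - 1))) ^ ((q - 1) / q) ≤ 1) →
      ∃ g : ∀ j, X → Y j → ℝ,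
        (∀ j x y, 0 ≤ g j x y) ∧
        (∀ x (y : ∀ j, Y j), M x ^ d * K x y ≤ ∏ j, g j x (y j)) ∧
        (∀ j (f : Y j → ℝ), (∀ y, 0 ≤ f y) →
          ∑ x, μ x * ∑ y, g j x y * f y ≤ A * N j f)) :
    -- conclusion: ‖T(f₁,…,f_d)^{1/d}‖_{L^q(μ)} ≤ A (N₁(f₁)⋯N_d(f_d))^{1/d}
    ∀ f : ∀ j, Y j → ℝ, (∀ j y, 0 ≤ f j y) →
      (∑ x, μ x * (∑ y : ∀ j, Y j, K x y * ∏ j, f j (y j)) ^ (q / d)) ^ (1 / q)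
        ≤ A * (∏ j, N j (f j)) ^ (1 / (d : ℝ)) := by
  intro f hf
  have hd0 : (0 : ℝ) < d := by exact_mod_cast hd
  have hq0 : (0 : ℝ) < q := lt_of_lt_of_le one_pos hq
  set t : X → ℝ := fun x => ∑ y : ∀ j, Y j, K x y * ∏ j, f j (y j) with ht_def
  have ht : ∀ x, 0 ≤ t x := fun x =>
    Finset.sum_nonneg fun y _ => mul_nonneg (hK x y)
      (Finset.prod_nonneg fun j _ => hf j (y j))
  set P : ℝ := ∑ x, μ x * t x ^ (q / d) with hP_def
  have hP0 : 0 ≤ P := Finset.sum_nonneg fun x _ =>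
    mul_nonneg (hμ x) (Real.rpow_nonneg (ht x) _)
  have hRHS0 : 0 ≤ A * (∏ j, N j (f j)) ^ (1 / (d : ℝ)) :=
    mul_nonneg hA.le (Real.rpow_nonneg
      (Finset.prod_nonneg fun j _ => hN_nonneg j (f j)) _)
  rcases eq_or_lt_of_le hP0 with hP | hP
  · rw [← hP, Real.zero_rpow (by positivity)]
    exact hRHS0
  -- Now P > 0. Define the dual weight M.
  set M : X → ℝ := fun x => t x ^ ((q - 1) / d) / P ^ ((q - 1) / q) with hM_def
  have hM0 : ∀ x, 0 ≤ M x := fun x =>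
    div_nonneg (Real.rpow_nonneg (ht x) _) (Real.rpow_nonneg hP0 _)
  have hMq1 : q = 1 → ∀ x, M x ≤ 1 := by
    intro h1 x
    simp only [hM_def, h1, sub_self, zero_div, Real.rpow_zero, div_one, le_refl]
  have hMq : 1 < q → (∑ x, μ x * M x ^ (q / (q - 1))) ^ ((q - 1) / q) ≤ 1 := by
    intro hq1
    have hq1' : q - 1 ≠ 0 := by linarith
    have hMx : ∀ x, M x ^ (q / (q - 1)) = t x ^ (q / d) / P := by
      intro x
      rw [hM_def]
      rw [Real.div_rpow (Real.rpow_nonneg (ht x) _) (Real.rpow_nonneg hP0 _)]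
      rw [← Real.rpow_mul (ht x), ← Real.rpow_mul hP0]
      congr 1
      · congr 1; field_simp
      · rw [show (q - 1) / q * (q / (q - 1)) = 1 by field_simp, Real.rpow_one]
    have : ∑ x, μ x * M x ^ (q / (q - 1)) = 1 := by
      rw [Finset.sum_congr rfl fun x _ => by rw [hMx x]]
      have : ∑ x, μ x * (t x ^ (q / d) / P) = (∑ x, μ x * t x ^ (q / d)) / P := by
        rw [Finset.sum_div]
        exact Finset.sum_congr rfl fun x _ => by ring
      rw [this, ← hP_def, div_self hP.ne']
    rw [this, Real.one_rpow]
  obtain ⟨g, hg0, hgK, hgN⟩ := hdual M hM0 hMq1 hMq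
  set S : Fin d → X → ℝ := fun j x => ∑ y, g j x y * f j y with hS_def
  have hS0 : ∀ j x, 0 ≤ S j x := fun j x =>
    Finset.sum_nonneg fun y _ => mul_nonneg (hg0 j x y) (hf j y)
  -- Key 1 : ∑ μ M t^{1/d} = P^{1/q}
  have key1 : ∑ x, μ x * (M x * t x ^ ((1 : ℝ) / d)) = P ^ (1 / q) := by
    have hMx : ∀ x, M x * t x ^ ((1 : ℝ) / d) = t x ^ (q / d) / P ^ ((q - 1) / q) := by
      intro x
      rw [hM_def]
      rw [div_mul_eq_mul_div]
      congr 1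
      have hdne : (d : ℝ) ≠ 0 := ne_of_gt hd0
      have hsum : (q - 1) / d + 1 / d = q / d := by field_simp; ring
      rw [← Real.rpow_add' (ht x) (by rw [hsum]; positivity), hsum]
    rw [Finset.sum_congr rfl fun x _ => by rw [hMx x]]
    have : ∑ x, μ x * (t x ^ (q / d) / P ^ ((q - 1) / q))
        = (∑ x, μ x * t x ^ (q / d)) / P ^ ((q - 1) / q) := by
      rw [Finset.sum_div]
      exact Finset.sum_congr rfl fun x _ => by ring
    rw [this, ← hP_def]
    rw [div_eq_iff (ne_of_gt (Real.rpow_pos_of_pos hP _))]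
    rw [← Real.rpow_add hP]
    rw [show 1 / q + (q - 1) / q = 1 by field_simp; ring, Real.rpow_one]
  -- Key 2 : M x * t x ^ (1/d) = (M x ^ d * t x) ^ (1/d)
  have key2 : ∀ x, M x * t x ^ ((1 : ℝ) / d) = (M x ^ d * t x) ^ ((1 : ℝ) / d) := by
    intro x
    rw [Real.mul_rpow (pow_nonneg (hM0 x) d) (ht x)]
    congr 1
    rw [← Real.rpow_natCast (M x) d, ← Real.rpow_mul (hM0 x)]
    rw [mul_one_div, div_self (ne_of_gt hd0), Real.rpow_one]
  -- Key 3 : M x ^ d * t x ≤ ∏ j, S j x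
  have key3 : ∀ x, M x ^ d * t x ≤ ∏ j, S j x := by
    intro x
    have step1 : M x ^ d * t x ≤ ∑ y : ∀ j, Y j, ∏ j, (g j x (y j) * f j (y j)) := by
      rw [ht_def]
      simp only
      rw [Finset.mul_sum]
      apply Finset.sum_le_sum
      intro y _
      rw [← mul_assoc]
      calc M x ^ d * K x y * ∏ j, f j (y j)
          ≤ (∏ j, g j x (y j)) * ∏ j, f j (y j) :=
            mul_le_mul_of_nonneg_right (hgK x y)
              (Finset.prod_nonneg fun j _ => hf j (y j))
        _ = ∏ j, (g j x (y j) * f j (y j)) := (Finset.prod_mul_distrib).symm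
    have step2 : ∑ y : ∀ j, Y j, ∏ j, (g j x (y j) * f j (y j)) = ∏ j, S j x := by
      rw [hS_def]
      simp only
      rw [Finset.prod_univ_sum]
      rw [← Fintype.piFinset_univ]
    linarith [step1, step2.le, step2.ge]
  -- Main chain
  have chain : P ^ (1 / q) ≤ ∏ j, (A * N j (f j)) ^ ((1 : ℝ) / d) := by
    rw [← key1]
    calc ∑ x, μ x * (M x * t x ^ ((1 : ℝ) / d))
        ≤ ∑ x, μ x * ∏ j, (S j x) ^ ((1 : ℝ) / d) := by
          apply Finset.sum_le_sum
          intro x _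
          apply mul_le_mul_of_nonneg_left _ (hμ x)
          rw [key2 x]
          calc (M x ^ d * t x) ^ ((1 : ℝ) / d)
              ≤ (∏ j, S j x) ^ ((1 : ℝ) / d) :=
                Real.rpow_le_rpow (mul_nonneg (pow_nonneg (hM0 x) d) (ht x))
                  (key3 x) (by positivity)
            _ = ∏ j, (S j x) ^ ((1 : ℝ) / d) :=
                (Real.finset_prod_rpow _ _ (fun j _ => hS0 j x) _).symm
      _ ≤ ∏ j, (∑ x, μ x * S j x) ^ ((1 : ℝ) / d) :=
          weighted_sum_geom_mean_le hd μ hμ S hS0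
      _ ≤ ∏ j, (A * N j (f j)) ^ ((1 : ℝ) / d) := by
          apply Finset.prod_le_prod
          · intro j _
            exact Real.rpow_nonneg (Finset.sum_nonneg fun x _ =>
              mul_nonneg (hμ x) (hS0 j x)) _
          · intro j _
            apply Real.rpow_le_rpow (Finset.sum_nonneg fun x _ =>
              mul_nonneg (hμ x) (hS0 j x)) _ (by positivity)
            exact hgN j (f j) (hf j)
  have final : ∏ j, (A * N j (f j)) ^ ((1 : ℝ) / d)
      = A * (∏ j, N j (f j)) ^ (1 / (d : ℝ)) := by
    have h1 : ∀ j : Fin d, (A * N j (f j)) ^ ((1 : ℝ) / d)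
        = A ^ ((1 : ℝ) / d) * (N j (f j)) ^ ((1 : ℝ) / d) := fun j =>
      Real.mul_rpow hA.le (hN_nonneg j (f j))
    rw [Finset.prod_congr rfl fun j _ => h1 j, Finset.prod_mul_distrib,
      Finset.prod_const, Finset.card_univ, Fintype.card_fin,
      Real.finset_prod_rpow _ _ (fun j _ => hN_nonneg j (f j)),
      ← Real.rpow_natCast (A ^ ((1:ℝ)/d)) d, ← Real.rpow_mul hA.le,
      one_div_mul_cancel (ne_of_gt hd0), Real.rpow_one]
  calc P ^ (1 / q) ≤ ∏ j, (A * N j (f j)) ^ ((1 : ℝ) / d) := chain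
    _ = A * (∏ j, N j (f j)) ^ (1 / (d : ℝ)) := final
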